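/- Let R : [ω_*, ω^*] → SO(3) be continuously differentiable, let F(t,ω) := R(ω) exp(σ(t) ω S), and suppose N : [0, ∞) × [ω_*, ω^*] → ℝ³ is continuously differentiable, has continuous mixed second partial derivative ∂²N/∂t∂ω, and satisfies the closed-loop equation ∂N/∂t(t,ω) = Σ_{i=1}^{2} u_i(t) [F(t,ω) e_i] ∧ N(t,ω) with the feedback u_i(t) := −H_i[t, N(t,·)] for i = 1,2. Then d/dt L(N(t,·)) = −u₁(t)² − u₂(t)² ≤ 0 wherever σ is differentiable; in particular t ↦ L(N(t,·)) is nonincreasing on [0, ∞). -/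

import Mathlib

noncomputable section

open scoped RealInnerProductSpace
open Matrix Set Filter

attribute [local instance] Matrix.normedAddCommGroup Matrix.normedSpace

/-- ℝ³ with the Euclidean norm. -/
abbrev E3 : Type := EuclideanSpace ℝ (Fin 3)

/-- First canonical basis vector of ℝ³. -/
def e1 : E3 := EuclideanSpace.single 0 1
/-- Second canonical basis vector of ℝ³. -/
def e2 : E3 := EuclideanSpace.single 1 1
/-- Third canonical basis vector of ℝ³. -/
def e3 : E3 := EuclideanSpace.single 2 1

/-- Cross (wedge) product on ℝ³. -/
def cross (x y : E3) : E3 :=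
  (WithLp.equiv 2 (Fin 3 → ℝ)).symm
    (crossProduct ((WithLp.equiv 2 (Fin 3 → ℝ)) x) ((WithLp.equiv 2 (Fin 3 → ℝ)) y))

/-- Action of a 3×3 real matrix on ℝ³. -/
def act (A : Matrix (Fin 3) (Fin 3) ℝ) (x : E3) : E3 := Matrix.toEuclideanLin A x

/-- Operator norm of a 3×3 real matrix w.r.t. the Euclidean norm. -/
def opNorm (A : Matrix (Fin 3) (Fin 3) ℝ) : ℝ :=
  ‖(LinearMap.toContinuousLinearMap (Matrix.toEuclideanLin A))‖

/-- `A ∈ SO(3)`. -/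
def IsSO (A : Matrix (Fin 3) (Fin 3) ℝ) : Prop := Aᵀ * A = 1 ∧ A.det = 1

/-- The matrix S with rows (0,1,0), (−1,0,0), (0,0,0). -/
def Smat : Matrix (Fin 3) (Fin 3) ℝ := !![0,1,0; -1,0,0; 0,0,0]

/-- Matrix exponential. -/
def expm (A : Matrix (Fin 3) (Fin 3) ℝ) : Matrix (Fin 3) (Fin 3) ℝ := NormedSpace.exp A

/-- The switching function σ(t) = ∫₀ᵗ (−1)^⌊s/T⌋ ds. -/
def sigma (T t : ℝ) : ℝ := ∫ s in (0:ℝ)..t, ((-1 : ℝ) ^ (⌊s / T⌋))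

/-- F(t,ω) = R(ω) exp(σ(t) ω S). -/
def Fmat (R : ℝ → Matrix (Fin 3) (Fin 3) ℝ) (T t ω : ℝ) : Matrix (Fin 3) (Fin 3) ℝ :=
  R ω * expm ((sigma T t * ω) • Smat)

/-- ∂F/∂ω(t,ω) = R′(ω) exp(σ(t) ω S) + σ(t) R(ω) S exp(σ(t) ω S). -/
def Fmatω (R R' : ℝ → Matrix (Fin 3) (Fin 3) ℝ) (T t ω : ℝ) : Matrix (Fin 3) (Fin 3) ℝ :=
  R' ω * expm ((sigma T t * ω) • Smat) + sigma T t • (R ω * (Smat * expm ((sigma T t * ω) • Smat)))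

/-- The functional H[t,N] (for basis direction `v`), where `N'` denotes dN/dω:
`H_v[t,N] = ∫ (⟨N′, (∂F/∂ω v) ∧ N⟩ + ⟨e₃, (F v) ∧ N⟩) dω`. -/
def Hfun (a b : ℝ) (R R' : ℝ → Matrix (Fin 3) (Fin 3) ℝ) (T t : ℝ)
    (N N' : ℝ → E3) (v : E3) : ℝ :=
  ∫ ω in a..b, (⟪N' ω, cross (act (Fmatω R R' T t ω) v) (N ω)⟫
    + ⟪e3, cross (act (Fmat R T t ω) v) (N ω)⟫)

/-- The Lyapunov functional L(N) = ∫ (½‖N′‖² + 1 + ⟨N, e₃⟩) dω. -/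
def Lfun (a b : ℝ) (N N' : ℝ → E3) : ℝ :=
  ∫ ω in a..b, ((1/2) * ‖N' ω‖^2 + 1 + ⟪N ω, e3⟫)


/-! ### Auxiliary lemmas -/

section Helpers
open scoped Topology
open MeasureTheory

local notation "Mat" => Matrix (Fin 3) (Fin 3) ℝ

section clean
attribute [-instance] Matrix.normedAddCommGroup Matrix.normedSpace
attribute [local instance] Matrix.linftyOpNormedRing Matrix.linftyOpNormedAlgebra

/-- entry extraction CLM (w.r.t. the linfty norm). -/
noncomputable def entryCLM (i j : Fin 3) : Mat →L[ℝ] ℝ :=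
  LinearMap.toContinuousLinearMap
    ((LinearMap.proj j).comp ((LinearMap.proj i).comp (LinearMap.id (R := ℝ) (M := Mat))))

theorem expm_entry_hasDerivAt (A : Mat) (x : ℝ) (i j : Fin 3) :
    HasDerivAt (fun u : ℝ => expm (u • A) i j) ((expm (x • A) * A) i j) x := by
  have h := hasDerivAt_exp_smul_const (𝕂 := ℝ) A x
  have h2 := ((entryCLM i j).hasFDerivAt.comp_hasDerivAt x h)
  exact h2

theorem expm_entry_continuous (A : Mat) (i j : Fin 3) :
    Continuous (fun u : ℝ => expm (u • A) i j) := by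
  have : Continuous (fun u : ℝ => NormedSpace.exp (u • A)) :=
    NormedSpace.exp_continuous.comp (continuous_id.smul continuous_const)
  exact ((entryCLM i j).continuous.comp this)

theorem expm_mul_comm (x : ℝ) : expm (x • Smat) * Smat = Smat * expm (x • Smat) := by
  have h : Commute (x • Smat) Smat := (Commute.refl Smat).smul_left x
  have := h.exp_left
  simpa [expm] using this.eq

end clean

theorem hasDerivWithinAt_matrix {M : ℝ → Mat} {M' : Mat} {s : Set ℝ} {x : ℝ} :
    HasDerivWithinAt M M' s x ↔
      ∀ i j, HasDerivWithinAt (fun t => M t i j) (M' i j) s x := by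
  exact hasDerivWithinAt_pi.trans (forall_congr' fun i => hasDerivWithinAt_pi)

theorem continuous_matrix' {X : Type*} [TopologicalSpace X] {M : X → Mat}
    (h : ∀ i j, Continuous fun t => M t i j) : Continuous M :=
  continuous_pi fun i => continuous_pi (h i)

theorem hasDerivAt_expm (A : Mat) (x : ℝ) :
    HasDerivAt (fun u : ℝ => expm (u • A)) (expm (x • A) * A) x := by
  have : ∀ i j, HasDerivAt (fun u : ℝ => expm (u • A) i j) ((expm (x • A) * A) i j) x :=
    expm_entry_hasDerivAt A x
  refine hasDerivWithinAt_univ.1 ?_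
  exact hasDerivWithinAt_matrix.2 fun i j => ((this i j).hasDerivWithinAt)

theorem continuous_expm_smul (A : Mat) : Continuous fun u : ℝ => expm (u • A) :=
  continuous_matrix' fun i j => expm_entry_continuous A i j

/-- multiplication of matrices as a continuous bilinear map (sup norm). -/
noncomputable def mulL : Mat →L[ℝ] Mat →L[ℝ] Mat :=
  LinearMap.toContinuousLinearMap
  { toFun := fun A => LinearMap.toContinuousLinearMap ((LinearMap.mul ℝ Mat) A)
    map_add' := by intro A B; ext C; simp [add_mul]
    map_smul' := by intro c A; ext C; simp [smul_mul_assoc] }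

theorem HasDerivWithinAt.matmul {f g : ℝ → Mat} {f' g' : Mat} {s : Set ℝ} {x : ℝ}
    (hf : HasDerivWithinAt f f' s x) (hg : HasDerivWithinAt g g' s x) :
    HasDerivWithinAt (fun t => f t * g t) (f' * g x + f x * g') s x := by
  have hf' := hasDerivWithinAt_matrix.1 hf
  have hg' := hasDerivWithinAt_matrix.1 hg
  refine hasDerivWithinAt_matrix.2 fun i j => ?_
  simp only [Matrix.mul_apply, Matrix.add_apply]
  rw [← Finset.sum_add_distrib]
  exact HasDerivWithinAt.fun_sum (fun k _ => (hf' i k).mul (hg' k j))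

/-- cross product as a continuous bilinear map. -/
noncomputable def crossL : E3 →L[ℝ] E3 →L[ℝ] E3 :=
  LinearMap.toContinuousLinearMap
  { toFun := fun x => LinearMap.toContinuousLinearMap
      { toFun := fun y => cross x y
        map_add' := by
          intro y z
          show cross x (y + z) = cross x y + cross x z
          simp only [cross]
          ext i
          simp [crossProduct]
          fin_cases i <;> simp <;> ring
        map_smul' := by
          intro c y
          show cross x (c • y) = c • cross x y
          simp only [cross]
          ext i
          simp [crossProduct]
          fin_cases i <;> simp <;> ring }
    map_add' := by
      intro x z; ext y i
      show cross (x + z) y _ = _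
      simp [cross, crossProduct]
      fin_cases i <;> simp <;> ring
    map_smul' := by
      intro c x; ext y i
      show cross (c • x) y _ = _
      simp [cross, crossProduct]
      fin_cases i <;> simp <;> ring }

theorem crossL_apply (x y : E3) : crossL x y = cross x y := rfl

theorem continuous_cross : Continuous fun p : E3 × E3 => cross p.1 p.2 := by
  have : Continuous fun p : E3 × E3 => crossL p.1 p.2 := crossL.continuous₂
  simpa [crossL_apply] using this

theorem HasDerivWithinAt.cross' {f g : ℝ → E3} {f' g' : E3} {s : Set ℝ} {x : ℝ}
    (hf : HasDerivWithinAt f f' s x) (hg : HasDerivWithinAt g g' s x) :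
    HasDerivWithinAt (fun t => cross (f t) (g t)) (cross f' (g x) + cross (f x) g') s x := by
  have hc : HasDerivWithinAt (fun t => crossL (f t)) (crossL f') s x :=
    crossL.hasFDerivAt.comp_hasDerivWithinAt x hf
  simpa [crossL_apply] using hc.clm_apply hg

/-- the action of matrices on a fixed vector, as a CLM in the matrix. -/
noncomputable def actL (v : E3) : Mat →L[ℝ] E3 :=
  LinearMap.toContinuousLinearMap
  { toFun := fun A => act A v
    map_add' := by intro A B; simp [act]
    map_smul' := by intro c A; simp [act] }

theorem actL_apply (A : Mat) (v : E3) : actL v A = act A v := rfl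

theorem HasDerivWithinAt.act' {M : ℝ → Mat} {M' : Mat} {s : Set ℝ} {x : ℝ}
    (h : HasDerivWithinAt M M' s x) (v : E3) :
    HasDerivWithinAt (fun t => act (M t) v) (act M' v) s x :=
  (actL v).hasFDerivAt.comp_hasDerivWithinAt x h

theorem continuous_act (v : E3) : Continuous fun A : Mat => act A v := (actL v).continuous

theorem inner_cross_self (x y : E3) : ⟪y, cross x y⟫ = 0 := by
  simp [cross, crossProduct, PiLp.inner_apply, Fin.sum_univ_three]
  ring

/-- continuity of σ. -/
theorem sigma_continuous (T : ℝ) : Continuous (sigma T) := by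
  apply intervalIntegral.continuous_primitive
  intro u v
  have hm : Measurable fun s : ℝ => ((-1 : ℝ)) ^ (⌊s / T⌋) := by
    have h1 : Measurable fun s : ℝ => (⌊s / T⌋ : ℤ) := (measurable_id.div_const T).floor
    exact (measurable_from_top (f := fun n : ℤ => ((-1 : ℝ)) ^ n)).comp h1
  refine (intervalIntegrable_const (c := (1:ℝ))).mono_fun hm.aestronglyMeasurable ?_
  filter_upwards with s
  rcases Int.even_or_odd (⌊s / T⌋) with h | h
  · simp [h.neg_one_zpow]
  · simp [h.neg_one_zpow]

/-- ω-derivative of `Fmat`. -/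
theorem hasDerivWithinAt_Fmat (R R' : ℝ → Mat) (T t : ℝ) {s : Set ℝ} {ω : ℝ}
    (hR : HasDerivWithinAt R (R' ω) s ω) :
    HasDerivWithinAt (fun ω => Fmat R T t ω) (Fmatω R R' T t ω) s ω := by
  set c := sigma T t with hc
  have hE : HasDerivAt (fun ω : ℝ => expm ((c * ω) • Smat))
      (c • (Smat * expm ((c * ω) • Smat))) ω := by
    have h1 := hasDerivAt_expm (c • Smat) ω
    have e1 : (fun u : ℝ => expm (u • (c • Smat))) = fun u : ℝ => expm ((c * u) • Smat) := by
      funext u; rw [smul_comm, ← smul_assoc, smul_eq_mul, mul_comm]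
    rw [e1] at h1
    have e2 : expm (ω • (c • Smat)) * (c • Smat) = c • (Smat * expm ((c * ω) • Smat)) := by
      rw [smul_smul, mul_comm ω c, mul_smul_comm, expm_mul_comm]
    rw [e2] at h1
    exact h1
  have := hR.matmul (hE.hasDerivWithinAt)
  simpa [Fmat, Fmatω, mul_smul_comm] using this


section FTCH
variable {EE : Type*} [NormedAddCommGroup EE] [NormedSpace ℝ EE] [CompleteSpace EE]

theorem primitive_hasDerivWithinAt_Ici {q : ℝ → EE} (hq : ContinuousOn q (Ici 0)) {t : ℝ}
    (ht : 0 ≤ t) :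
    HasDerivWithinAt (fun u => ∫ s in (0:ℝ)..u, q s) (q t) (Ici 0) t := by
  have hmeasIci : MeasureTheory.AEStronglyMeasurable q (MeasureTheory.volume.restrict (Ici (0:ℝ))) :=
    hq.aestronglyMeasurable measurableSet_Ici
  have hint : IntervalIntegrable q MeasureTheory.volume 0 t := by
    apply ContinuousOn.intervalIntegrable
    apply hq.mono
    rw [uIcc_of_le ht]
    exact fun x hx => hx.1
  rcases eq_or_lt_of_le ht with h | h
  · subst h
    refine intervalIntegral.integral_hasDerivWithinAt_right hint ⟨Ici 0, ?_, hmeasIci⟩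
      ((hq 0 self_mem_Ici).mono Ioi_subset_Ici_self)
    exact mem_of_superset self_mem_nhdsWithin Ioi_subset_Ici_self
  · have hmem : Ici (0:ℝ) ∈ 𝓝 t := Ici_mem_nhds h
    have := intervalIntegral.integral_hasDerivAt_right hint ⟨Ici 0, hmem, hmeasIci⟩
      ((hq t h.le).continuousAt hmem)
    exact this.hasDerivWithinAt

theorem primitive_hasDerivWithinAt_Icc {q : ℝ → EE} {a b : ℝ} (hab : a < b)
    (hq : ContinuousOn q (Icc a b)) {ω : ℝ} (hω : ω ∈ Icc a b) :
    HasDerivWithinAt (fun u => ∫ x in a..u, q x) (q ω) (Icc a b) ω := by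
  have hmeas : MeasureTheory.AEStronglyMeasurable q (MeasureTheory.volume.restrict (Icc a b)) :=
    hq.aestronglyMeasurable measurableSet_Icc
  have hint : IntervalIntegrable q MeasureTheory.volume a ω := by
    apply ContinuousOn.intervalIntegrable
    apply hq.mono
    rw [uIcc_of_le hω.1]
    exact Icc_subset_Icc le_rfl hω.2
  rcases eq_or_lt_of_le hω.1 with h1 | h1
  · rcases h1
    have hmem : Icc a b ∈ 𝓝[Ioi a] a := by
      refine mem_of_superset (inter_mem_nhdsWithin _ (Iio_mem_nhds hab)) ?_
      exact fun x hx => ⟨hx.1.le, hx.2.le⟩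
    have h := intervalIntegral.integral_hasDerivWithinAt_right (s := Ici a) (t := Ioi a) hint
      ⟨Icc a b, hmem, hmeas⟩ ((hq a ⟨le_rfl, hab.le⟩).mono_of_mem_nhdsWithin hmem)
    exact h.mono Icc_subset_Ici_self
  rcases eq_or_lt_of_le hω.2 with h2 | h2
  · subst h2
    have hmem : Icc a ω ∈ 𝓝[Iic ω] ω := by
      refine mem_of_superset (inter_mem_nhdsWithin _ (Ioi_mem_nhds hab)) ?_
      exact fun x hx => ⟨hx.2.le, hx.1⟩
    have h := intervalIntegral.integral_hasDerivWithinAt_right (s := Iic ω) (t := Iic ω) hint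
      ⟨Icc a ω, hmem, hmeas⟩ ((hq ω ⟨hab.le, le_rfl⟩).mono_of_mem_nhdsWithin hmem)
    exact h.mono Icc_subset_Iic_self
  · have hmem : Icc a b ∈ 𝓝 ω := Icc_mem_nhds h1 h2
    have := intervalIntegral.integral_hasDerivAt_right hint ⟨Icc a b, hmem, hmeas⟩
      ((hq ω hω).continuousAt hmem)
    exact this.hasDerivWithinAt

theorem integral_deriv_Ici {φ dφ : ℝ → EE} {t : ℝ} (ht : 0 ≤ t)
    (hφ : ∀ s ∈ Ici (0:ℝ), HasDerivWithinAt φ (dφ s) (Ici 0) s)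
    (hcont : ContinuousOn dφ (Ici 0)) :
    ∫ s in (0:ℝ)..t, dφ s = φ t - φ 0 := by
  apply intervalIntegral.integral_eq_sub_of_hasDeriv_right_of_le ht
  · intro s hs
    exact ((hφ s hs.1).continuousWithinAt).mono (fun x hx => hx.1)
  · intro s hs
    exact ((hφ s hs.1.le).hasDerivAt (Ici_mem_nhds hs.1)).hasDerivWithinAt
  · apply ContinuousOn.intervalIntegrable
    apply hcont.mono
    rw [uIcc_of_le ht]
    exact fun x hx => hx.1

theorem integral_deriv_Icc {φ dφ : ℝ → EE} {a b ω : ℝ} (hab : a ≤ b) (hω : ω ∈ Icc a b)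
    (hφ : ∀ x ∈ Icc a b, HasDerivWithinAt φ (dφ x) (Icc a b) x)
    (hcont : ContinuousOn dφ (Icc a b)) :
    ∫ x in a..ω, dφ x = φ ω - φ a := by
  apply intervalIntegral.integral_eq_sub_of_hasDeriv_right_of_le hω.1
  · intro x hx
    exact ((hφ x ⟨hx.1, hx.2.trans hω.2⟩).continuousWithinAt).mono
      (fun y hy => ⟨hy.1, hy.2.trans hω.2⟩)
  · intro x hx
    exact ((hφ x ⟨hx.1.le, (hx.2.trans_le hω.2).le⟩).hasDerivAt
      (Icc_mem_nhds hx.1 (hx.2.trans_le hω.2))).hasDerivWithinAt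
  · apply ContinuousOn.intervalIntegrable
    apply hcont.mono
    rw [uIcc_of_le hω.1]
    exact Icc_subset_Icc le_rfl hω.2

theorem continuousOn_param_integral {f : ℝ × ℝ → EE} {a b β : ℝ} (hab : a ≤ b)
    (hβ : β ∈ Icc a b)
    (hf : ContinuousOn f (Ici 0 ×ˢ Icc a b)) :
    ContinuousOn (fun t => ∫ ω in a..β, f (t, ω)) (Ici 0) := by
  intro t0 ht0
  have hK : IsCompact (Icc (0:ℝ) (t0+1) ×ˢ Icc a b) := isCompact_Icc.prod isCompact_Icc
  obtain ⟨C, hC⟩ := hK.exists_bound_of_continuousOn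
    (hf.mono (prod_mono (fun x hx => hx.1) subset_rfl))
  have hmemIcc : ∀ᶠ t in 𝓝[Ici 0] t0, t ∈ Icc 0 (t0+1) := by
    have h1 : ∀ᶠ t in 𝓝[Ici 0] t0, t ≤ t0 + 1 :=
      (eventually_le_nhds (by linarith)).filter_mono nhdsWithin_le_nhds
    filter_upwards [h1, eventually_mem_nhdsWithin] with t h1 h2
    exact ⟨h2, h1⟩
  have hsub : Set.uIoc a β ⊆ Icc a b := by
    rw [uIoc_of_le hβ.1]
    exact fun x hx => ⟨hx.1.le, hx.2.trans hβ.2⟩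
  apply intervalIntegral.continuousWithinAt_of_dominated_interval (bound := fun _ => C)
  · filter_upwards [hmemIcc, eventually_mem_nhdsWithin] with t h1 h2
    have hco : ContinuousOn (fun ω => f (t, ω)) (Icc a b) := by
      have := ContinuousOn.comp hf ((continuous_const.prodMk continuous_id).continuousOn
        (s := Icc a b)) (fun ω hω => ⟨h2, hω⟩)
      exact this
    exact (hco.aestronglyMeasurable measurableSet_Icc).mono_measure
      (MeasureTheory.Measure.restrict_mono hsub le_rfl)
  · filter_upwards [hmemIcc] with t h1
    filter_upwards with ω
    intro hω
    exact hC (t, ω) ⟨h1, hsub hω⟩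
  · exact intervalIntegrable_const
  · filter_upwards with ω
    intro hω
    have h1 : ContinuousWithinAt (fun t : ℝ => ((t, ω) : ℝ × ℝ)) (Ici 0) t0 :=
      (continuous_id.prodMk continuous_const).continuousWithinAt
    exact ContinuousWithinAt.comp (f := fun t : ℝ => ((t, ω) : ℝ × ℝ))
      (hf (t0, ω) ⟨ht0, hsub hω⟩) h1 (fun t ht => ⟨ht, hsub hω⟩)

theorem interval_integral_swap {f : ℝ × ℝ → EE} {t α β : ℝ} (ht : 0 ≤ t) (hαβ : α ≤ β)
    (hf : ContinuousOn f (Icc 0 t ×ˢ Icc α β)) :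
    ∫ s in (0:ℝ)..t, (∫ x in α..β, f (s, x)) = ∫ x in α..β, (∫ s in (0:ℝ)..t, f (s, x)) := by
  have hi : MeasureTheory.IntegrableOn f
      (Ioc 0 t ×ˢ Ioc α β) ((MeasureTheory.volume : MeasureTheory.Measure ℝ).prod
        MeasureTheory.volume) :=
    (hf.integrableOn_compact (isCompact_Icc.prod isCompact_Icc)).mono_set
      (prod_mono Ioc_subset_Icc_self Ioc_subset_Icc_self)
  have hi2 : MeasureTheory.Integrable (Function.uncurry (fun s x => f (s, x)))
      ((MeasureTheory.volume.restrict (Ioc (0:ℝ) t)).prod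
        (MeasureTheory.volume.restrict (Ioc α β))) := by
    rw [MeasureTheory.Measure.prod_restrict]
    exact hi
  have h := MeasureTheory.integral_integral_swap hi2
  simp only [intervalIntegral.integral_of_le ht, intervalIntegral.integral_of_le hαβ]
  exact h

theorem intInt_Ici {q : ℝ → EE} (hq : ContinuousOn q (Ici 0)) {u : ℝ} (hu : u ∈ Ici (0:ℝ)) :
    IntervalIntegrable q MeasureTheory.volume 0 u := by
  apply ContinuousOn.intervalIntegrable
  apply hq.mono
  rw [uIcc_of_le hu]
  exact fun x hx => hx.1

theorem intInt_Icc {q : ℝ → EE} {a b ω : ℝ} (hq : ContinuousOn q (Icc a b))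
    (hω : ω ∈ Icc a b) : IntervalIntegrable q MeasureTheory.volume a ω := by
  apply ContinuousOn.intervalIntegrable
  apply hq.mono
  rw [uIcc_of_le hω.1]
  exact Icc_subset_Icc le_rfl hω.2

end FTCH


section Slices
variable {EE : Type*} [NormedAddCommGroup EE] [NormedSpace ℝ EE]

theorem sliceT {F : ℝ × ℝ → EE} {a b : ℝ}
    (hF : ContinuousOn F (Ici 0 ×ˢ Icc a b)) {ω : ℝ}
    (hω : ω ∈ Icc a b) : ContinuousOn (fun s => F (s, ω)) (Ici 0) := by
  have h1 : ContinuousOn (fun s : ℝ => ((s, ω) : ℝ × ℝ)) (Ici 0) :=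
    (continuous_id.prodMk continuous_const).continuousOn
  exact ContinuousOn.comp (f := fun s : ℝ => ((s, ω) : ℝ × ℝ)) hF h1 (fun s hs => ⟨hs, hω⟩)

theorem sliceW {F : ℝ × ℝ → EE} {a b t : ℝ}
    (hF : ContinuousOn F (Ici 0 ×ˢ Icc a b))
    (ht : t ∈ Ici (0:ℝ)) : ContinuousOn (fun ω => F (t, ω)) (Icc a b) := by
  have h1 : ContinuousOn (fun ω : ℝ => ((t, ω) : ℝ × ℝ)) (Icc a b) :=
    (continuous_const.prodMk continuous_id).continuousOn
  exact ContinuousOn.comp (f := fun ω : ℝ => ((t, ω) : ℝ × ℝ)) hF h1 (fun ω hω => ⟨ht, hω⟩)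

end Slices

set_option maxHeartbeats 1000000 in
theorem ContinuousOn.matmul' {X : Type*} [TopologicalSpace X] {f g : X → Mat} {s : Set X}
    (hf : ContinuousOn f s) (hg : ContinuousOn g s) :
    ContinuousOn (fun x => f x * g x) s := by
  have h2 : ContinuousOn ((fun p : Mat × Mat => mulL p.1 p.2) ∘ fun x => (f x, g x)) s :=
    mulL.continuous₂.comp_continuousOn (hf.prodMk hg)
  simpa [Function.comp_def, mulL] using h2

set_option maxHeartbeats 1000000 in
theorem ContinuousOn.cross'' {X : Type*} [TopologicalSpace X] {f g : X → E3} {s : Set X}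
    (hf : ContinuousOn f s) (hg : ContinuousOn g s) :
    ContinuousOn (fun x => cross (f x) (g x)) s := by
  have h2 : ContinuousOn ((fun p : E3 × E3 => cross p.1 p.2) ∘ fun x => (f x, g x)) s :=
    continuous_cross.comp_continuousOn (hf.prodMk hg)
  simpa [Function.comp_def] using h2

set_option maxHeartbeats 1000000 in
theorem ContinuousOn.act'' {X : Type*} [TopologicalSpace X] {f : X → Mat} {s : Set X}
    (hf : ContinuousOn f s) (v : E3) :
    ContinuousOn (fun x => act (f x) v) s := by
  have h2 : ContinuousOn ((fun A : Mat => act A v) ∘ f) s :=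
    (continuous_act v).comp_continuousOn hf
  simpa [Function.comp_def] using h2

end Helpers

/-- The dissipation identity (12): with the feedback `uᵢ(t) = −Hᵢ[t, N(t,·)]`,
`d/dt L(N(t,·)) = −u₁(t)² − u₂(t)² ≤ 0` wherever σ is differentiable; in particular
`t ↦ L(N(t,·))` is nonincreasing on `[0, ∞)`. -/
theorem stmt9 (a b : ℝ) (hab : a < b) (T : ℝ) (hT : 0 < T)
    (R R' : ℝ → Matrix (Fin 3) (Fin 3) ℝ)
    (hRderiv : ∀ ω ∈ Icc a b, HasDerivWithinAt R (R' ω) (Icc a b) ω)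
    (hR'cont : ContinuousOn R' (Icc a b))
    (hRSO : ∀ ω ∈ Icc a b, IsSO (R ω))
    (N Nω Ntω : ℝ → ℝ → E3)
    (u1 u2 : ℝ → ℝ)
    (hu1 : ∀ t ∈ Ici (0:ℝ), u1 t = -Hfun a b R R' T t (N t) (Nω t) e1)
    (hu2 : ∀ t ∈ Ici (0:ℝ), u2 t = -Hfun a b R R' T t (N t) (Nω t) e2)
    (hNcont : ContinuousOn (fun p : ℝ × ℝ => N p.1 p.2) (Ici 0 ×ˢ Icc a b))
    (hNω : ∀ t ∈ Ici (0:ℝ), ∀ ω ∈ Icc a b, HasDerivWithinAt (N t) (Nω t ω) (Icc a b) ω)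
    (hNωcont : ContinuousOn (fun p : ℝ × ℝ => Nω p.1 p.2) (Ici 0 ×ˢ Icc a b))
    (hNtω : ∀ t ∈ Ici (0:ℝ), ∀ ω ∈ Icc a b,
      HasDerivWithinAt (fun s => Nω s ω) (Ntω t ω) (Ici 0) t)
    (hNtωcont : ContinuousOn (fun p : ℝ × ℝ => Ntω p.1 p.2) (Ici 0 ×ˢ Icc a b))
    (hPDE : ∀ t ∈ Ici (0:ℝ), ∀ ω ∈ Icc a b,
      HasDerivWithinAt (fun s => N s ω)
        (u1 t • cross (act (Fmat R T t ω) e1) (N t ω)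
          + u2 t • cross (act (Fmat R T t ω) e2) (N t ω)) (Ici 0) t) :
    (∀ t ∈ Ici (0:ℝ), DifferentiableAt ℝ (sigma T) t →
      HasDerivWithinAt (fun s => Lfun a b (N s) (Nω s))
        (-(u1 t) ^ 2 - (u2 t) ^ 2) (Ici 0) t) ∧
    AntitoneOn (fun t => Lfun a b (N t) (Nω t)) (Ici 0) := by
  have habl : a ≤ b := hab.le
  have hmema : a ∈ Icc a b := left_mem_Icc.2 habl
  have hmemb : b ∈ Icc a b := right_mem_Icc.2 habl
  set P : ℝ → ℝ → E3 := fun t ω =>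
    u1 t • cross (act (Fmat R T t ω) e1) (N t ω)
      + u2 t • cross (act (Fmat R T t ω) e2) (N t ω) with hPdef
  have hPDE' : ∀ t ∈ Ici (0:ℝ), ∀ ω ∈ Icc a b,
      HasDerivWithinAt (fun s => N s ω) (P t ω) (Ici 0) t := by
    intro t ht ω hω
    simp only [hPdef]
    exact hPDE t ht ω hω
  -- continuity facts
  have hRcont : ContinuousOn R (Icc a b) := fun ω hω => (hRderiv ω hω).continuousWithinAt
  have hsig : Continuous (sigma T) := sigma_continuous T
  have hexp : Continuous fun p : ℝ × ℝ => expm ((sigma T p.1 * p.2) • Smat) := by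
    have h1 : Continuous fun p : ℝ × ℝ => sigma T p.1 * p.2 :=
      (hsig.comp continuous_fst).mul continuous_snd
    exact (continuous_expm_smul Smat).comp h1
  have hR2 : ContinuousOn (fun p : ℝ × ℝ => R p.2) (Ici 0 ×ˢ Icc a b) :=
    ContinuousOn.comp (f := fun p : ℝ × ℝ => p.2) hRcont
      continuous_snd.continuousOn (fun p hp => hp.2)
  have hR'2 : ContinuousOn (fun p : ℝ × ℝ => R' p.2) (Ici 0 ×ˢ Icc a b) :=
    ContinuousOn.comp (f := fun p : ℝ × ℝ => p.2) hR'cont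
      continuous_snd.continuousOn (fun p hp => hp.2)
  have hFcont : ContinuousOn (fun p : ℝ × ℝ => Fmat R T p.1 p.2) (Ici 0 ×ˢ Icc a b) := by
    have := hR2.matmul' hexp.continuousOn
    simpa [Fmat] using this
  have hFωcont : ContinuousOn (fun p : ℝ × ℝ => Fmatω R R' T p.1 p.2) (Ici 0 ×ˢ Icc a b) := by
    have h1 := hR'2.matmul' hexp.continuousOn
    have h2 : ContinuousOn (fun p : ℝ × ℝ => Smat * expm ((sigma T p.1 * p.2) • Smat))
        (Ici 0 ×ˢ Icc a b) := continuousOn_const.matmul' hexp.continuousOn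
    have h3 := hR2.matmul' h2
    have h4 : ContinuousOn (fun p : ℝ × ℝ => sigma T p.1) (Ici 0 ×ˢ Icc a b) :=
      (hsig.comp continuous_fst).continuousOn
    have := h1.add (h4.smul h3)
    exact this
  have hih : ∀ v : E3, ContinuousOn (fun p : ℝ × ℝ =>
      (⟪Nω p.1 p.2, cross (act (Fmatω R R' T p.1 p.2) v) (N p.1 p.2)⟫
        + ⟪e3, cross (act (Fmat R T p.1 p.2) v) (N p.1 p.2)⟫ : ℝ)) (Ici 0 ×ˢ Icc a b) := by
    intro v
    have c1 := (hFωcont.act'' v).cross'' hNcont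
    have c2 := (hFcont.act'' v).cross'' hNcont
    exact (hNωcont.inner c1).add (continuousOn_const.inner c2)
  have hHcont : ∀ v : E3,
      ContinuousOn (fun t => Hfun a b R R' T t (N t) (Nω t) v) (Ici 0) := by
    intro v
    have := continuousOn_param_integral habl hmemb (hih v)
    simpa [Hfun] using this
  have hu1c : ContinuousOn u1 (Ici 0) := ContinuousOn.congr ((hHcont e1).neg) hu1
  have hu2c : ContinuousOn u2 (Ici 0) := ContinuousOn.congr ((hHcont e2).neg) hu2
  have hPcont : ContinuousOn (fun p : ℝ × ℝ => P p.1 p.2) (Ici 0 ×ˢ Icc a b) := by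
    have c1 := (hFcont.act'' e1).cross'' hNcont
    have c2 := (hFcont.act'' e2).cross'' hNcont
    have hu1' : ContinuousOn (fun p : ℝ × ℝ => u1 p.1) (Ici 0 ×ˢ Icc a b) :=
      ContinuousOn.comp (f := fun p : ℝ × ℝ => p.1) hu1c
        continuous_fst.continuousOn (fun p hp => hp.1)
    have hu2' : ContinuousOn (fun p : ℝ × ℝ => u2 p.1) (Ici 0 ×ˢ Icc a b) :=
      ContinuousOn.comp (f := fun p : ℝ × ℝ => p.1) hu2c
        continuous_fst.continuousOn (fun p hp => hp.1)
    have := (hu1'.smul c1).add (hu2'.smul c2)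
    exact this
  -- FTC identities
  have hC1 : ∀ t ∈ Ici (0:ℝ), ∀ ω ∈ Icc a b,
      ∫ s in (0:ℝ)..t, P s ω = N t ω - N 0 ω := fun t ht ω hω =>
    integral_deriv_Ici ht (fun s hs => hPDE' s hs ω hω) (sliceT hPcont hω)
  have hC2 : ∀ t ∈ Ici (0:ℝ), ∀ ω ∈ Icc a b,
      ∫ s in (0:ℝ)..t, Ntω s ω = Nω t ω - Nω 0 ω := fun t ht ω hω =>
    integral_deriv_Ici ht (fun s hs => hNtω s hs ω hω) (sliceT hNtωcont hω)
  have hC3 : ∀ t ∈ Ici (0:ℝ), ∀ ω ∈ Icc a b,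
      ∫ x in a..ω, Nω t x = N t ω - N t a := fun t ht ω hω =>
    integral_deriv_Icc habl hω (fun x hx => hNω t ht x hx) (sliceW hNωcont ht)
  -- the mixed-derivative (Clairaut) identity
  have hKey : ∀ t ∈ Ici (0:ℝ), ∀ ω ∈ Icc a b,
      P t ω = P t a + ∫ x in a..ω, Ntω t x := by
    intro t ht ω hω
    have hqcont : ContinuousOn (fun s => P s ω - P s a - ∫ x in a..ω, Ntω s x) (Ici 0) :=
      ((sliceT hPcont hω).sub (sliceT hPcont hmema)).sub
        (continuousOn_param_integral habl hω hNtωcont)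
    have hQ0 : ∀ u ∈ Ici (0:ℝ),
        ∫ s in (0:ℝ)..u, (P s ω - P s a - ∫ x in a..ω, Ntω s x) = 0 := by
      intro u hu
      have i1 : IntervalIntegrable (fun s => P s ω) MeasureTheory.volume 0 u :=
        intInt_Ici (sliceT hPcont hω) hu
      have i2 : IntervalIntegrable (fun s => P s a) MeasureTheory.volume 0 u :=
        intInt_Ici (sliceT hPcont hmema) hu
      have i3 : IntervalIntegrable (fun s => ∫ x in a..ω, Ntω s x) MeasureTheory.volume 0 u :=
        intInt_Ici (continuousOn_param_integral habl hω hNtωcont) hu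
      rw [intervalIntegral.integral_sub (i1.sub i2) i3, intervalIntegral.integral_sub i1 i2]
      rw [hC1 u hu ω hω, hC1 u hu a hmema]
      have hswap : ∫ s in (0:ℝ)..u, (∫ x in a..ω, Ntω s x)
          = ∫ x in a..ω, (∫ s in (0:ℝ)..u, Ntω s x) :=
        interval_integral_swap hu hω.1 (hNtωcont.mono
          (prod_mono (fun z hz => hz.1) (Icc_subset_Icc le_rfl hω.2)))
      rw [hswap]
      have hinner : ∀ x ∈ uIcc a ω, (∫ s in (0:ℝ)..u, Ntω s x) = Nω u x - Nω 0 x := by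
        intro x hx
        rw [uIcc_of_le hω.1] at hx
        exact hC2 u hu x ⟨hx.1, hx.2.trans hω.2⟩
      rw [intervalIntegral.integral_congr hinner]
      have i4 : IntervalIntegrable (fun x => Nω u x) MeasureTheory.volume a ω :=
        intInt_Icc (sliceW hNωcont hu) hω
      have i5 : IntervalIntegrable (fun x => Nω 0 x) MeasureTheory.volume a ω :=
        intInt_Icc (sliceW hNωcont self_mem_Ici) hω
      rw [intervalIntegral.integral_sub i4 i5, hC3 u hu ω hω, hC3 0 self_mem_Ici ω hω]
      abel
    have h1 := primitive_hasDerivWithinAt_Ici hqcont ht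
    have h2 : HasDerivWithinAt
        (fun v => ∫ s in (0:ℝ)..v, (P s ω - P s a - ∫ x in a..ω, Ntω s x)) 0 (Ici 0) t :=
      (hasDerivWithinAt_const t (Ici 0) 0).congr (fun v hv => hQ0 v hv) (hQ0 t ht)
    have h3 := (uniqueDiffOn_Ici 0 t ht).eq_deriv _ h1 h2
    have h4 : P t ω - P t a = ∫ x in a..ω, Ntω t x := sub_eq_zero.mp h3
    have h5 := eq_add_of_sub_eq h4
    rw [add_comm] at h5
    exact h5
  -- pointwise formula for the mixed derivative
  have hNtωeq : ∀ t ∈ Ici (0:ℝ), ∀ ω ∈ Icc a b, Ntω t ω =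
      u1 t • (cross (act (Fmatω R R' T t ω) e1) (N t ω)
              + cross (act (Fmat R T t ω) e1) (Nω t ω))
      + u2 t • (cross (act (Fmatω R R' T t ω) e2) (N t ω)
              + cross (act (Fmat R T t ω) e2) (Nω t ω)) := by
    intro t ht ω hω
    have hA : HasDerivWithinAt (fun x => P t x) (Ntω t ω) (Icc a b) ω := by
      have hprim := primitive_hasDerivWithinAt_Icc hab (sliceW hNtωcont ht) hω
      exact (hprim.const_add (P t a)).congr (fun x hx => hKey t ht x hx) (hKey t ht ω hω)
    have hF := hasDerivWithinAt_Fmat R R' T t (hRderiv ω hω)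
    have h1 : HasDerivWithinAt (fun x => cross (act (Fmat R T t x) e1) (N t x))
        (cross (act (Fmatω R R' T t ω) e1) (N t ω)
          + cross (act (Fmat R T t ω) e1) (Nω t ω)) (Icc a b) ω :=
      (hF.act' e1).cross' (hNω t ht ω hω)
    have h2 : HasDerivWithinAt (fun x => cross (act (Fmat R T t x) e2) (N t x))
        (cross (act (Fmatω R R' T t ω) e2) (N t ω)
          + cross (act (Fmat R T t ω) e2) (Nω t ω)) (Icc a b) ω :=
      (hF.act' e2).cross' (hNω t ht ω hω)
    have hB : HasDerivWithinAt (fun x => P t x)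
        (u1 t • (cross (act (Fmatω R R' T t ω) e1) (N t ω)
              + cross (act (Fmat R T t ω) e1) (Nω t ω))
          + u2 t • (cross (act (Fmatω R R' T t ω) e2) (N t ω)
              + cross (act (Fmat R T t ω) e2) (Nω t ω))) (Icc a b) ω := by
      have := (h1.const_smul (u1 t)).add (h2.const_smul (u2 t))
      exact this
    exact (uniqueDiffOn_Icc hab ω hω).eq_deriv _ hA hB
  -- joint continuity of the dissipation integrand
  have hhcont : ContinuousOn (fun p : ℝ × ℝ =>
      (⟪Nω p.1 p.2, Ntω p.1 p.2⟫ + ⟪P p.1 p.2, e3⟫ : ℝ)) (Ici 0 ×ˢ Icc a b) :=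
    (hNωcont.inner hNtωcont).add (hPcont.inner continuousOn_const)
  -- the derivative of L as a double integral
  have hLdiff : ∀ t ∈ Ici (0:ℝ),
      Lfun a b (N t) (Nω t) - Lfun a b (N 0) (Nω 0)
        = ∫ s in (0:ℝ)..t, ∫ ω in a..b, (⟪Nω s ω, Ntω s ω⟫ + ⟪P s ω, e3⟫) := by
    intro t ht
    have key : ∀ ω ∈ uIcc a b,
        (((1:ℝ)/2) * ‖Nω t ω‖^2 + 1 + ⟪N t ω, e3⟫)
            - (((1:ℝ)/2) * ‖Nω 0 ω‖^2 + 1 + ⟪N 0 ω, e3⟫)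
          = ∫ s in (0:ℝ)..t, (⟪Nω s ω, Ntω s ω⟫ + ⟪P s ω, e3⟫) := by
      intro ω hω'
      have hω : ω ∈ Icc a b := by rwa [uIcc_of_le habl] at hω'
      have hφ : ∀ s ∈ Ici (0:ℝ), HasDerivWithinAt
          (fun s => ((1:ℝ)/2) * ‖Nω s ω‖^2 + 1 + ⟪N s ω, e3⟫)
          (⟪Nω s ω, Ntω s ω⟫ + ⟪P s ω, e3⟫) (Ici 0) s := by
        intro s hs
        have h1 := HasDerivWithinAt.inner ℝ (hNtω s hs ω hω) (hNtω s hs ω hω)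
        have h2 := h1.const_mul ((1:ℝ)/2)
        have h3 := HasDerivWithinAt.inner ℝ (hPDE' s hs ω hω)
          (hasDerivWithinAt_const s (Ici 0) e3)
        have h4 : HasDerivWithinAt (fun s => ((1:ℝ)/2) * ⟪Nω s ω, Nω s ω⟫ + 1 + ⟪N s ω, e3⟫) _ (Ici 0) s := (h2.add_const 1).add h3
        have hfun : (fun s => ((1:ℝ)/2) * ⟪Nω s ω, Nω s ω⟫ + 1 + ⟪N s ω, e3⟫)
            = fun s => ((1:ℝ)/2) * ‖Nω s ω‖^2 + 1 + ⟪N s ω, e3⟫ := by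
          funext z
          rw [real_inner_self_eq_norm_sq]
        rw [hfun] at h4
        convert h4 using 1
        have hcomm : ⟪Ntω s ω, Nω s ω⟫ = ⟪Nω s ω, Ntω s ω⟫ := real_inner_comm _ _
        rw [hcomm, inner_zero_right]
        ring
      have hcont' : ContinuousOn (fun s => (⟪Nω s ω, Ntω s ω⟫ + ⟪P s ω, e3⟫ : ℝ)) (Ici 0) :=
        sliceT hhcont hω
      exact (integral_deriv_Ici ht hφ hcont').symm
    have hLint : ∀ u ∈ Ici (0:ℝ), IntervalIntegrable
        (fun ω => ((1:ℝ)/2) * ‖Nω u ω‖^2 + 1 + ⟪N u ω, e3⟫) MeasureTheory.volume a b := by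
      intro u hu
      apply intInt_Icc _ hmemb
      exact ((continuousOn_const.mul ((sliceW hNωcont hu).norm.pow 2)).add
        continuousOn_const).add ((sliceW hNcont hu).inner continuousOn_const)
    have h5 : Lfun a b (N t) (Nω t) - Lfun a b (N 0) (Nω 0)
        = ∫ ω in a..b, ((((1:ℝ)/2) * ‖Nω t ω‖^2 + 1 + ⟪N t ω, e3⟫)
            - (((1:ℝ)/2) * ‖Nω 0 ω‖^2 + 1 + ⟪N 0 ω, e3⟫)) := by
      rw [intervalIntegral.integral_sub (hLint t ht) (hLint 0 self_mem_Ici)]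
      rfl
    rw [h5, intervalIntegral.integral_congr key]
    exact (interval_integral_swap ht habl (hhcont.mono
      (prod_mono (fun z hz => hz.1) subset_rfl))).symm
  -- the dissipation identity pointwise in time
  have hgid : ∀ t ∈ Ici (0:ℝ),
      (∫ ω in a..b, (⟪Nω t ω, Ntω t ω⟫ + ⟪P t ω, e3⟫)) = -(u1 t)^2 - (u2 t)^2 := by
    intro t ht
    have hpt : ∀ ω ∈ uIcc a b, (⟪Nω t ω, Ntω t ω⟫ + ⟪P t ω, e3⟫ : ℝ)
        = u1 t * (⟪Nω t ω, cross (act (Fmatω R R' T t ω) e1) (N t ω)⟫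
              + ⟪e3, cross (act (Fmat R T t ω) e1) (N t ω)⟫)
          + u2 t * (⟪Nω t ω, cross (act (Fmatω R R' T t ω) e2) (N t ω)⟫
              + ⟪e3, cross (act (Fmat R T t ω) e2) (N t ω)⟫) := by
      intro ω hω'
      have hω : ω ∈ Icc a b := by rwa [uIcc_of_le habl] at hω'
      rw [hNtωeq t ht ω hω]
      simp only [hPdef]
      have c1 : ⟪cross (act (Fmat R T t ω) e1) (N t ω), e3⟫
          = ⟪e3, cross (act (Fmat R T t ω) e1) (N t ω)⟫ := real_inner_comm _ _
      have c2 : ⟪cross (act (Fmat R T t ω) e2) (N t ω), e3⟫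
          = ⟪e3, cross (act (Fmat R T t ω) e2) (N t ω)⟫ := real_inner_comm _ _
      simp only [inner_add_right, inner_add_left, real_inner_smul_right, real_inner_smul_left,
        inner_cross_self, c1, c2]
      ring
    rw [intervalIntegral.integral_congr hpt]
    have j1 : IntervalIntegrable (fun ω =>
        (⟪Nω t ω, cross (act (Fmatω R R' T t ω) e1) (N t ω)⟫
          + ⟪e3, cross (act (Fmat R T t ω) e1) (N t ω)⟫ : ℝ)) MeasureTheory.volume a b :=
      intInt_Icc (sliceW (hih e1) ht) hmemb
    have j2 : IntervalIntegrable (fun ω =>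
        (⟪Nω t ω, cross (act (Fmatω R R' T t ω) e2) (N t ω)⟫
          + ⟪e3, cross (act (Fmat R T t ω) e2) (N t ω)⟫ : ℝ)) MeasureTheory.volume a b :=
      intInt_Icc (sliceW (hih e2) ht) hmemb
    rw [intervalIntegral.integral_add (j1.const_mul (u1 t)) (j2.const_mul (u2 t)),
      intervalIntegral.integral_const_mul, intervalIntegral.integral_const_mul]
    have hH1 : (∫ ω in a..b, (⟪Nω t ω, cross (act (Fmatω R R' T t ω) e1) (N t ω)⟫
        + ⟪e3, cross (act (Fmat R T t ω) e1) (N t ω)⟫ : ℝ))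
        = Hfun a b R R' T t (N t) (Nω t) e1 := rfl
    have hH2 : (∫ ω in a..b, (⟪Nω t ω, cross (act (Fmatω R R' T t ω) e2) (N t ω)⟫
        + ⟪e3, cross (act (Fmat R T t ω) e2) (N t ω)⟫ : ℝ))
        = Hfun a b R R' T t (N t) (Nω t) e2 := rfl
    rw [hH1, hH2]
    have k1 : Hfun a b R R' T t (N t) (Nω t) e1 = -u1 t := by
      rw [hu1 t ht]; ring
    have k2 : Hfun a b R R' T t (N t) (Nω t) e2 = -u2 t := by
      rw [hu2 t ht]; ring
    rw [k1, k2]; ring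
  -- final assembly
  have hgcont : ContinuousOn (fun s => -(u1 s)^2 - (u2 s)^2) (Ici 0) :=
    ((hu1c.pow 2).neg).sub (hu2c.pow 2)
  have hmain : ∀ t ∈ Ici (0:ℝ), HasDerivWithinAt (fun s => Lfun a b (N s) (Nω s))
      (-(u1 t)^2 - (u2 t)^2) (Ici 0) t := by
    intro t ht
    have hprim := primitive_hasDerivWithinAt_Ici hgcont ht
    have heq : ∀ u ∈ Ici (0:ℝ), Lfun a b (N u) (Nω u)
        = Lfun a b (N 0) (Nω 0) + ∫ s in (0:ℝ)..u, (-(u1 s)^2 - (u2 s)^2) := by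
      intro u hu
      have h6 : ∫ s in (0:ℝ)..u, (-(u1 s)^2 - (u2 s)^2)
          = ∫ s in (0:ℝ)..u, ∫ ω in a..b, (⟪Nω s ω, Ntω s ω⟫ + ⟪P s ω, e3⟫) := by
        apply intervalIntegral.integral_congr
        intro s hs
        rw [uIcc_of_le hu] at hs
        exact (hgid s hs.1).symm
      rw [h6, ← hLdiff u hu]
      ring
    exact (hprim.const_add (Lfun a b (N 0) (Nω 0))).congr (fun u hu => heq u hu) (heq t ht)
  refine ⟨fun t ht _ => hmain t ht, ?_⟩
  apply antitoneOn_of_deriv_nonpos (convex_Ici 0)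
  · exact fun t ht => (hmain t ht).continuousWithinAt
  · intro t ht
    rw [interior_Ici] at ht
    have ht' : t ∈ Ici (0:ℝ) := mem_Ici.2 (le_of_lt ht)
    exact ((hmain t ht').hasDerivAt (Ici_mem_nhds ht)).differentiableAt.differentiableWithinAt
  · intro t ht
    rw [interior_Ici] at ht
    have ht' : t ∈ Ici (0:ℝ) := mem_Ici.2 (le_of_lt ht)
    rw [((hmain t ht').hasDerivAt (Ici_mem_nhds ht)).deriv]
    nlinarith [sq_nonneg (u1 t), sq_nonneg (u2 t)]
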